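/- For a diagonal map between Hilbert spaces: let H, K be separable Hilbert spaces with orthonormal bases (e_n), (f_n) and let T: H → K be bounded with T e_n = σ_n f_n, where σ_n ≥ 0 is nonincreasing and σ_n → 0. Then the n-th Kolmogorov diameter of T(B_H) with respect to B_K equals σ_n. -/

import Mathlib

set_option maxHeartbeats 1000000

open Pointwise Filter

/-- The `n`-th Kolmogorov diameter of `A` with respect to `B` (complex subspaces). -/
noncomputable def kolDiam {X : Type*} [AddCommGroup X] [Module ℂ X] [Module ℝ X]
    (n : ℕ) (A B : Set X) : ℝ :=
  sInf {δ : ℝ | 0 < δ ∧ ∃ F : Submodule ℂ X, FiniteDimensional ℂ F ∧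
    Module.finrank ℂ F ≤ n ∧ A ⊆ δ • B + (F : Set X)}

section Aux
open ENNReal
variable {H K : Type*}
    [NormedAddCommGroup H] [InnerProductSpace ℂ H]
    [NormedAddCommGroup K] [InnerProductSpace ℂ K]

local notation "⟪" x ", " y "⟫" => @inner ℂ _ _ x y

lemma aux_memℓp_two_of_le {f g : ℕ → ℂ} (hg : Memℓp g 2) (h : ∀ i, ‖f i‖ ≤ ‖g i‖) :
    Memℓp f 2 := by
  have hp : (0:ℝ) < (2 : ℝ≥0∞).toReal := by simp
  apply memℓp_gen
  refine Summable.of_nonneg_of_le (fun i => by positivity) (fun i => ?_) (hg.summable hp)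
  exact Real.rpow_le_rpow (norm_nonneg _) (h i) (by positivity)

lemma aux_lp_norm_le {F G : lp (fun _ : ℕ => ℂ) 2} (h : ∀ i, ‖F i‖ ≤ ‖G i‖) :
    ‖F‖ ≤ ‖G‖ := by
  have hp : (0:ℝ) < (2 : ℝ≥0∞).toReal := by simp
  have h1 := lp.hasSum_norm hp F
  have h2 := lp.hasSum_norm hp G
  have hle : ‖F‖ ^ (2 : ℝ≥0∞).toReal ≤ ‖G‖ ^ (2 : ℝ≥0∞).toReal :=
    hasSum_le (fun i => Real.rpow_le_rpow (norm_nonneg _) (h i) (by positivity)) h1 h2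
  have ht : ((2:ℝ≥0∞)).toReal = (2:ℝ) := by norm_num
  rw [ht] at hle
  have hF2 : ‖F‖ ^ (2:ℝ) = ‖F‖ ^ (2:ℕ) := by
    rw [← Real.rpow_natCast ‖F‖ 2]; norm_num
  have hG2 : ‖G‖ ^ (2:ℝ) = ‖G‖ ^ (2:ℕ) := by
    rw [← Real.rpow_natCast ‖G‖ 2]; norm_num
  rw [hF2, hG2] at hle
  exact pow_le_pow_iff_left₀ (lp.norm_nonneg' F) (lp.norm_nonneg' G) (by norm_num) |>.mp hle

lemma aux_coeff_T (e : HilbertBasis ℕ ℂ H) (f : HilbertBasis ℕ ℂ K)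
    (T : H →L[ℂ] K) (σ : ℕ → ℝ)
    (hT : ∀ n : ℕ, T (e n) = (σ n : ℂ) • f n) (x : H) (i : ℕ) :
    f.repr (T x) i = (σ i : ℂ) * e.repr x i := by
  have h1 : HasSum (fun k => e.repr x k • e k) x := e.hasSum_repr x
  have h2 : HasSum (fun k => e.repr x k • T (e k)) (T x) := by
    simpa using h1.mapL T
  have h3 : HasSum (fun k => ⟪f i, e.repr x k • T (e k)⟫) ⟪f i, T x⟫ := by
    have := h2.mapL (innerSL ℂ (f i))
    simpa only [innerSL_apply_apply] using this
  have h4 : (fun k => ⟪f i, e.repr x k • T (e k)⟫)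
      = fun k => if i = k then (σ i : ℂ) * e.repr x i else 0 := by
    funext k
    rw [hT k, inner_smul_right, inner_smul_right,
      orthonormal_iff_ite.mp f.orthonormal i k]
    by_cases h : i = k
    · simp [h]; ring
    · simp [h]
  rw [h4] at h3
  have h5 : HasSum (fun k => if i = k then (σ i : ℂ) * e.repr x i else 0)
      ((σ i : ℂ) * e.repr x i) := by
    convert hasSum_ite_eq i ((σ i : ℂ) * e.repr x i) using 2 with k
    simp [eq_comm]
  rw [f.repr_apply_apply]
  exact h3.unique h5

/-- Upper bound: for any `δ > σ n` there is a suitable subspace. -/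
lemma aux_upper (e : HilbertBasis ℕ ℂ H) (f : HilbertBasis ℕ ℂ K)
    (T : H →L[ℂ] K) (σ : ℕ → ℝ)
    (hσanti : Antitone σ) (hσ0 : ∀ n, 0 ≤ σ n)
    (hT : ∀ n : ℕ, T (e n) = (σ n : ℂ) • f n) (n : ℕ) {δ : ℝ} (hδ : σ n < δ) :
    ∃ F : Submodule ℂ K, FiniteDimensional ℂ F ∧ Module.finrank ℂ F ≤ n ∧
      T '' Metric.closedBall 0 1 ⊆ δ • Metric.closedBall 0 1 + (F : Set K) := by
  classical
  have hδpos : 0 < δ := lt_of_le_of_lt (hσ0 n) hδ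
  set s : Finset K := (Finset.range n).image f with hs
  refine ⟨Submodule.span ℂ (s : Set K), FiniteDimensional.span_of_finite ℂ s.finite_toSet,
    le_trans (finrank_span_finset_le_card s) (le_trans Finset.card_image_le (by simp)), ?_⟩
  rintro _ ⟨x, hx, rfl⟩
  rw [Metric.mem_closedBall, dist_zero_right] at hx
  set c := e.repr x with hc
  have hcn : ‖c‖ ≤ 1 := by rw [hc, LinearIsometryEquiv.norm_map]; exact hx
  set d : ℕ → ℂ := fun k => if k < n then 0 else (σ k : ℂ) * c k with hd
  have hbound : ∀ k, ‖d k‖ ≤ ‖((σ n : ℂ) • (c : ℕ → ℂ)) k‖ := by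
    intro k
    by_cases h : k < n
    · simp only [hd, h, if_true, norm_zero]
      exact norm_nonneg _
    · simp only [hd, h, if_false, Pi.smul_apply, smul_eq_mul, norm_mul,
        Complex.norm_real, Real.norm_eq_abs, abs_of_nonneg (hσ0 k), abs_of_nonneg (hσ0 n)]
      exact mul_le_mul_of_nonneg_right (hσanti (not_lt.mp h)) (norm_nonneg _)
  have hmem : Memℓp d 2 := by
    refine aux_memℓp_two_of_le ?_ hbound
    simpa using (lp.memℓp c).const_smul (σ n : ℂ)
  set dl : lp (fun _ : ℕ => ℂ) 2 := ⟨d, hmem⟩ with hdl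
  have hdlnorm : ‖dl‖ ≤ σ n := by
    have h1 : ‖dl‖ ≤ ‖(σ n : ℂ) • c‖ := by
      refine aux_lp_norm_le fun i => ?_
      rw [lp.coeFn_smul]
      exact hbound i
    have h2 : ‖(σ n : ℂ) • c‖ = σ n * ‖c‖ := by
      rw [norm_smul, Complex.norm_real, Real.norm_eq_abs, abs_of_nonneg (hσ0 n)]
    calc ‖dl‖ ≤ σ n * ‖c‖ := h2 ▸ h1
      _ ≤ σ n * 1 := by exact mul_le_mul_of_nonneg_left hcn (hσ0 n)
      _ = σ n := mul_one _
  set u : K := f.repr.symm dl with hu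
  set v : K := ∑ k ∈ Finset.range n, ((σ k : ℂ) * c k) • f k with hv
  have hTx : T x = u + v := by
    apply f.repr.injective
    rw [map_add]
    have hru : f.repr u = dl := by rw [hu, LinearIsometryEquiv.apply_symm_apply]
    rw [hru]
    apply lp.ext
    funext j
    have hj1 : f.repr (T x) j = (σ j : ℂ) * c j := aux_coeff_T e f T σ hT x j
    have hj2 : f.repr v j = if j < n then (σ j : ℂ) * c j else 0 := by
      rw [f.repr_apply_apply]
      by_cases h : j < n
      · rw [f.orthonormal.inner_right_sum _ (Finset.mem_range.mpr h)]
        simp [h]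
      · simp only [h, if_false, hv]
        rw [inner_sum]
        refine Finset.sum_eq_zero fun k hk => ?_
        rw [inner_smul_right, orthonormal_iff_ite.mp f.orthonormal j k]
        have : j ≠ k := fun hjk => h (hjk ▸ Finset.mem_range.mp hk)
        simp [this]
    have : (⇑(f.repr (T x)) : ℕ → ℂ) j = (⇑(dl + f.repr v) : ℕ → ℂ) j := by
      rw [hj1, lp.coeFn_add, Pi.add_apply, hj2]
      simp only [hdl]
      by_cases h : j < n <;> simp [hd, h]
    exact this
  rw [hTx]
  refine Set.add_mem_add ?_ ?_
  · rw [Set.mem_smul_set_iff_inv_smul_mem₀ (ne_of_gt hδpos)]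
    rw [Metric.mem_closedBall, dist_zero_right, norm_smul, Real.norm_eq_abs,
      abs_of_pos (inv_pos.mpr hδpos)]
    have hun : ‖u‖ ≤ σ n := by rw [hu, LinearIsometryEquiv.norm_map]; exact hdlnorm
    rw [inv_mul_le_iff₀ hδpos, mul_one]
    exact le_trans hun hδ.le
  · refine Submodule.sum_mem _ fun k hk => Submodule.smul_mem _ _ ?_
    exact Submodule.subset_span (by simp [hs]; exact ⟨k, Finset.mem_range.mp hk, rfl⟩)


lemma aux_norm_sq_sum {E' : Type*} [NormedAddCommGroup E'] [InnerProductSpace ℂ E'] {m : ℕ}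
    {v : Fin m → E'} (hv : Orthonormal ℂ v) (l : Fin m → ℂ) :
    ‖∑ i, l i • v i‖ ^ 2 = ∑ i, ‖l i‖ ^ 2 := by
  rw [@norm_sq_eq_re_inner ℂ, hv.inner_sum l l Finset.univ, map_sum]
  refine Finset.sum_congr rfl fun i _ => ?_
  rw [RCLike.conj_mul]
  norm_cast

lemma aux_lower (e : HilbertBasis ℕ ℂ H) (f : HilbertBasis ℕ ℂ K)
    (T : H →L[ℂ] K) (σ : ℕ → ℝ)
    (hσanti : Antitone σ) (hσ0 : ∀ n, 0 ≤ σ n)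
    (hT : ∀ n : ℕ, T (e n) = (σ n : ℂ) • f n) (n : ℕ) {δ : ℝ} (hδpos : 0 < δ)
    (F : Submodule ℂ K) (hFfin : FiniteDimensional ℂ F) (hFrank : Module.finrank ℂ F ≤ n)
    (hsub : T '' Metric.closedBall 0 1 ⊆ δ • Metric.closedBall 0 1 + (F : Set K)) :
    σ n ≤ δ := by
  classical
  rcases eq_or_lt_of_le (hσ0 n) with h0 | hσn
  · linarith
  have hσpos : ∀ i : Fin (n + 1), 0 < σ (i : ℕ) :=
    fun i => lt_of_lt_of_le hσn (hσanti (Nat.lt_succ_iff.mp i.isLt))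
  -- the (n+1)-dimensional subspace spanned by f 0, ..., f n
  set b : Fin (n + 1) → K := fun i => f (i : ℕ) with hb
  have hbon : Orthonormal ℂ b := f.orthonormal.comp _ Fin.val_injective
  set E : Submodule ℂ K := Submodule.span ℂ (Set.range b) with hE
  have hEfin : FiniteDimensional ℂ E :=
    FiniteDimensional.span_of_finite ℂ (Set.finite_range b)
  have hErank : Module.finrank ℂ E = n + 1 := by
    rw [hE, finrank_span_eq_card hbon.linearIndependent]
    simp
  have hEcomp : CompleteSpace E := FiniteDimensional.complete ℂ E
  set P := E.orthogonalProjectionOnto with hP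
  set G : Submodule ℂ E := F.map (P : K →ₗ[ℂ] E) with hG
  have hGrank : Module.finrank ℂ G ≤ n :=
    le_trans (Submodule.finrank_map_le _ _) hFrank
  have hGne : Gᗮ ≠ ⊥ := by
    intro hbot
    have : G = ⊤ := Submodule.orthogonal_eq_bot_iff.mp hbot
    rw [this] at hGrank
    rw [finrank_top] at hGrank
    omega
  obtain ⟨y0, hy0G, hy0ne⟩ := Submodule.exists_mem_ne_zero_of_ne_bot hGne
  set y : E := ‖y0‖⁻¹ • y0 with hy
  have hyG : y ∈ Gᗮ := Submodule.smul_mem _ _ hy0G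
  have hyn : ‖y‖ = 1 := norm_smul_inv_norm hy0ne
  -- representation of y
  have hymem : (y : K) ∈ Submodule.span ℂ (Set.range b) := hE ▸ y.2
  obtain ⟨c, hcy⟩ := (Submodule.mem_span_range_iff_exists_fun ℂ).mp hymem
  have hcsum : ∑ i, ‖c i‖ ^ 2 = 1 := by
    have := aux_norm_sq_sum hbon c
    rw [hcy] at this
    rw [← this]
    have : ‖(y : K)‖ = 1 := by rw [Submodule.norm_coe]; exact hyn
    rw [this]; norm_num
  -- the preimage point
  set l : Fin (n + 1) → ℂ := fun i => ((σ n / σ (i : ℕ) : ℝ) : ℂ) * c i with hl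
  set ve : Fin (n + 1) → H := fun i => e (i : ℕ) with hve
  have hveon : Orthonormal ℂ ve := e.orthonormal.comp _ Fin.val_injective
  set x : H := ∑ i, l i • ve i with hx
  have hxnorm : ‖x‖ ≤ 1 := by
    have h1 : ‖x‖ ^ 2 = ∑ i, ‖l i‖ ^ 2 := aux_norm_sq_sum hveon l
    have h2 : ∑ i, ‖l i‖ ^ 2 ≤ ∑ i, ‖c i‖ ^ 2 := by
      refine Finset.sum_le_sum fun i _ => ?_
      have : ‖l i‖ = (σ n / σ (i : ℕ)) * ‖c i‖ := by
        rw [hl, norm_mul, Complex.norm_real, Real.norm_eq_abs,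
          abs_of_nonneg (div_nonneg (hσ0 n) (hσ0 _))]
      have hle1 : σ n / σ (i : ℕ) ≤ 1 :=
        div_le_one_of_le₀ (hσanti (Nat.lt_succ_iff.mp i.isLt)) (hσ0 _)
      have hle2 : ‖l i‖ ≤ ‖c i‖ := by
        rw [this]
        calc (σ n / σ (i : ℕ)) * ‖c i‖ ≤ 1 * ‖c i‖ :=
              mul_le_mul_of_nonneg_right hle1 (norm_nonneg _)
          _ = ‖c i‖ := one_mul _
      exact pow_le_pow_left₀ (norm_nonneg _) hle2 2
    have h3 : ‖x‖ ^ 2 ≤ 1 ^ 2 := by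
      rw [h1, one_pow, ← hcsum]; exact h2
    exact (pow_le_pow_iff_left₀ (norm_nonneg x) zero_le_one (by norm_num)).mp h3
  have hTx : T x = (σ n : ℂ) • (y : K) := by
    rw [hx, map_sum, ← hcy, Finset.smul_sum]
    refine Finset.sum_congr rfl fun i _ => ?_
    rw [map_smul, hT, hl, hb, smul_smul, smul_smul]
    congr 1
    push_cast
    rw [mul_comm, ← mul_assoc, mul_div_cancel₀ _
      (show ((σ (i : ℕ) : ℂ)) ≠ 0 by exact_mod_cast (hσpos i).ne'), mul_comm]
  -- the decomposition
  have hmem : (σ n : ℂ) • (y : K) ∈ δ • Metric.closedBall (0:K) 1 + (F : Set K) := by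
    apply hsub
    exact ⟨x, by rw [Metric.mem_closedBall, dist_zero_right]; exact hxnorm, hTx⟩
  obtain ⟨u, hu, g, hg, hug⟩ := Set.mem_add.mp hmem
  obtain ⟨w, hw, rfl⟩ := hu
  rw [Metric.mem_closedBall, dist_zero_right] at hw
  -- inner product with y kills g
  have hyg : ⟪(y : K), g⟫ = 0 := by
    have h1 : g - ↑(P g) ∈ Eᗮ := E.sub_starProjection_mem_orthogonal g
    have h2 : ⟪(y : K), g - ↑(P g)⟫ = 0 :=
      Submodule.inner_right_of_mem_orthogonal y.2 h1
    have h3 : ⟪(y : K), (↑(P g) : K)⟫ = 0 := by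
      have hPgG : P g ∈ G := ⟨g, hg, rfl⟩
      have := Submodule.inner_right_of_mem_orthogonal hPgG hyG
      -- this : ⟪P g, y⟫_E = 0
      have h4 : ⟪y, P g⟫ = 0 := by
        rw [← inner_conj_symm, this, map_zero]
      calc ⟪(y : K), (↑(P g) : K)⟫ = ⟪y, P g⟫ := (Submodule.coe_inner E y (P g)).symm
        _ = 0 := h4
    have := inner_sub_right (𝕜 := ℂ) (y : K) g (↑(P g))
    rw [h2, h3] at this
    linear_combination -this
  have hy1 : ‖(y : K)‖ = 1 := by rw [Submodule.norm_coe]; exact hyn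
  have h1 : ⟪(y : K), (σ n : ℂ) • (y : K)⟫ = (σ n : ℂ) := by
    rw [inner_smul_right, inner_self_eq_norm_sq_to_K, hy1]
    norm_num
  have h2 : ⟪(y : K), δ • w + g⟫ = (δ : ℂ) * ⟪(y : K), w⟫ := by
    rw [inner_add_right, hyg, add_zero]
    have : δ • w = ((δ : ℂ)) • w := by
      rw [← algebraMap_smul ℂ δ w]; norm_num
    rw [this, inner_smul_right]
  have h3 : (σ n : ℂ) = (δ : ℂ) * ⟪(y : K), w⟫ := by
    rw [← h1, ← h2, hug]
  have h4 : (σ n : ℝ) = δ * RCLike.re ⟪(y : K), w⟫ := by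
    have := congrArg Complex.re h3
    simpa [Complex.re_ofReal_mul] using this
  have h5 : RCLike.re ⟪(y : K), w⟫ ≤ 1 := by
    calc RCLike.re ⟪(y : K), w⟫ ≤ ‖(y : K)‖ * ‖w‖ := re_inner_le_norm _ _
      _ = ‖w‖ := by rw [hy1, one_mul]
      _ ≤ 1 := hw
  calc σ n = δ * RCLike.re ⟪(y : K), w⟫ := h4
    _ ≤ δ * 1 := mul_le_mul_of_nonneg_left h5 hδpos.le
    _ = δ := mul_one _

end Aux

/-- For a diagonal operator `T` between separable Hilbert spaces, `T e_n = σ_n f_n` with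
`σ` nonincreasing, nonnegative, tending to `0`, the `n`-th Kolmogorov diameter of
`T(B_H)` with respect to `B_K` equals `σ_n`. -/
theorem stmt_14 {H K : Type*}
    [NormedAddCommGroup H] [InnerProductSpace ℂ H]
    [NormedAddCommGroup K] [InnerProductSpace ℂ K]
    (e : HilbertBasis ℕ ℂ H) (f : HilbertBasis ℕ ℂ K)
    (T : H →L[ℂ] K) (σ : ℕ → ℝ)
    (hσanti : Antitone σ) (hσ0 : ∀ n, 0 ≤ σ n)
    (hσlim : Tendsto σ atTop (nhds 0))
    (hT : ∀ n : ℕ, T (e n) = (σ n : ℂ) • f n) :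
    ∀ n : ℕ, kolDiam n (T '' Metric.closedBall 0 1) (Metric.closedBall 0 1) = σ n := by
  intro n
  set S : Set ℝ := {δ : ℝ | 0 < δ ∧ ∃ F : Submodule ℂ K, FiniteDimensional ℂ F ∧
    Module.finrank ℂ F ≤ n ∧
    T '' Metric.closedBall 0 1 ⊆ δ • Metric.closedBall 0 1 + (F : Set K)} with hS
  have hkey : ∀ ε : ℝ, 0 < ε → σ n + ε ∈ S := by
    intro ε hε
    obtain ⟨F, h1, h2, h3⟩ := aux_upper e f T σ hσanti hσ0 hT n
      (show σ n < σ n + ε by linarith)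
    exact ⟨by have := hσ0 n; linarith, F, h1, h2, h3⟩
  have hlow : ∀ δ ∈ S, σ n ≤ δ := by
    rintro δ ⟨hδpos, F, h1, h2, h3⟩
    exact aux_lower e f T σ hσanti hσ0 hT n hδpos F h1 h2 h3
  have hne : S.Nonempty := ⟨σ n + 1, hkey 1 one_pos⟩
  have hbdd : BddBelow S := ⟨0, fun δ hδ => hδ.1.le⟩
  have hup : kolDiam n (T '' Metric.closedBall 0 1) (Metric.closedBall 0 1) ≤ σ n := by
    refine le_of_forall_pos_le_add fun ε hε => ?_
    exact csInf_le hbdd (hkey ε hε)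
  have hlo : σ n ≤ kolDiam n (T '' Metric.closedBall 0 1) (Metric.closedBall 0 1) :=
    le_csInf hne hlow
  linarith
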